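/- The limiting kurtosis of the Gepner statistic on W(n,n,n) equals 21/5: with m_r(n) the r-th central moment of gep over W(n,n,n), the sequence m_4(n)/m_2(n)² tends to 21/5 as n → ∞. In particular the limit is not 3, so the Gepner statistic on W(n,n,n) is not asymptotically normal. -/

import Mathlib

/-- The Gepner statistic of a word `w` over a totally ordered alphabet:
the number of triples of positions `i < j < k` such that `w_i w_j w_k`
reduces to one of the odd permutations `132`, `213`, `321`. -/
def gep {α : Type*} [LinearOrder α] (w : List α) : ℕ :=
  (Finset.univ.filter (fun t : Fin w.length × Fin w.length × Fin w.length =>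
    t.1 < t.2.1 ∧ t.2.1 < t.2.2 ∧
      ((w.get t.1 < w.get t.2.2 ∧ w.get t.2.2 < w.get t.2.1) ∨
       (w.get t.2.1 < w.get t.1 ∧ w.get t.1 < w.get t.2.2) ∨
       (w.get t.2.2 < w.get t.2.1 ∧ w.get t.2.1 < w.get t.1)))).card

/-- `W a1 a2 a3` is the (finite) set of words over the alphabet `{1,2,3}`
with exactly `a1` occurrences of `1`, `a2` occurrences of `2` and
`a3` occurrences of `3`. -/
def W (a1 a2 a3 : ℕ) : Finset (List ℕ) :=
  ((List.replicate a1 1 ++ List.replicate a2 2 ++ List.replicate a3 3).permutations).toFinset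
/-- The `r`-th central moment of the Gepner statistic over `W(n,n,n)`,
i.e. `(1/|W(n,n,n)|) ∑_{w ∈ W(n,n,n)} (gep(w) − n³/2)^r`, viewed as a
real number. -/
noncomputable def m (r n : ℕ) : ℝ :=
  (∑ w ∈ W n n n, ((gep w : ℝ) - (n : ℝ) ^ 3 / 2) ^ r) / ((W n n n).card : ℝ)

/-- `W a1 a2 a3` is the (finite) set of words over the alphabet `{1,2,3}`
with exactly `a1` occurrences of `1`, `a2` occurrences of `2` and
`a3` occurrences of `3`. -/
def odd3 (x y z : ℕ) : Prop :=
  (x < z ∧ z < y) ∨ (y < x ∧ x < z) ∨ (z < y ∧ y < x)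

instance : ∀ x y z, Decidable (odd3 x y z) := fun x y z => by unfold odd3; infer_instance

def s1 (q : ℕ → Prop) [DecidablePred q] (w : List ℕ) : ℕ :=
  ∑ k : Fin w.length, if q (w.get k) then 1 else 0

def s2 (p : ℕ → ℕ → Prop) [∀ y z, Decidable (p y z)] (w : List ℕ) : ℕ :=
  ∑ j : Fin w.length, ∑ k : Fin w.length,
    if j < k ∧ p (w.get j) (w.get k) then 1 else 0

lemma s1_cons (q : ℕ → Prop) [DecidablePred q] (y : ℕ) (w : List ℕ) :
    s1 q (y :: w) = (if q y then 1 else 0) + s1 q w := by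
  show (∑ k : Fin (w.length + 1), if q ((y :: w).get k) then 1 else 0) = _
  rw [Fin.sum_univ_succ]
  simp [s1]
  split_ifs <;> simp_all

lemma s2_cons (p : ℕ → ℕ → Prop) [∀ y z, Decidable (p y z)] (y : ℕ) (w : List ℕ) :
    s2 p (y :: w) = s1 (p y) w + s2 p w := by
  show (∑ j : Fin (w.length + 1), ∑ k : Fin (w.length + 1),
      if j < k ∧ p ((y :: w).get j) ((y :: w).get k) then 1 else 0) = _
  simp only [Fin.sum_univ_succ, Fin.succ_lt_succ_iff, Fin.succ_pos, Fin.not_lt_zero,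
    false_and, if_false, List.get_cons_zero, List.get_cons_succ, lt_self_iff_false,
    Finset.sum_const_zero, zero_add, add_zero, true_and]
  simp [s1, s2]

lemma gep_eq_sum (w : List ℕ) :
    gep w = ∑ i : Fin w.length, ∑ j : Fin w.length, ∑ k : Fin w.length,
      if i < j ∧ j < k ∧ odd3 (w.get i) (w.get j) (w.get k) then 1 else 0 := by
  rw [gep, Finset.card_filter]
  rw [Fintype.sum_prod_type]
  congr 1; ext i
  rw [Fintype.sum_prod_type]
  rfl

lemma gep_cons (x : ℕ) (w : List ℕ) :
    gep (x :: w) = s2 (odd3 x) w + gep w := by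
  rw [gep_eq_sum, gep_eq_sum]
  show (∑ i : Fin (w.length + 1), ∑ j : Fin (w.length + 1), ∑ k : Fin (w.length + 1),
      if i < j ∧ j < k ∧ odd3 ((x :: w).get i) ((x :: w).get j) ((x :: w).get k) then 1 else 0) = _
  simp only [Fin.sum_univ_succ, Fin.succ_lt_succ_iff, Fin.succ_pos, Fin.not_lt_zero,
    false_and, and_false, if_false, List.get_cons_zero, List.get_cons_succ, lt_self_iff_false,
    Finset.sum_const_zero, zero_add, add_zero, true_and]
  simp [s1, s2]

/-- ordered pair count: number of (j,k), j<k, w_j = u, w_k = v -/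
def pc (u v : ℕ) : List ℕ → ℕ
  | [] => 0
  | x :: w => (if x = u then w.count v else 0) + pc u v w

lemma s1_count (v : ℕ) (w : List ℕ) : s1 (fun z => z = v) w = w.count v := by
  induction w with
  | nil => simp [s1]
  | cons y w ih => rw [s1_cons, ih, List.count_cons]; by_cases h : y = v <;> simp [h] <;> omega

lemma s1_congr {q q' : ℕ → Prop} [DecidablePred q] [DecidablePred q'] (w : List ℕ)
    (h : ∀ u ∈ w, q u ↔ q' u) : s1 q w = s1 q' w := by
  unfold s1
  refine Finset.sum_congr rfl (fun k _ => ?_)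
  have := h (w.get k) (List.get_mem w k)
  by_cases hq : q (w.get k)
  · rw [if_pos hq, if_pos (by tauto)]
  · rw [if_neg hq, if_neg (by tauto)]

lemma s2_eq_pc (p : ℕ → ℕ → Prop) [∀ y z, Decidable (p y z)] (u v : ℕ) (w : List ℕ)
    (hletters : ∀ z ∈ w, 1 ≤ z ∧ z ≤ 3)
    (hp : ∀ y z, 1 ≤ y → y ≤ 3 → 1 ≤ z → z ≤ 3 → (p y z ↔ (y = u ∧ z = v))) :
    s2 p w = pc u v w := by
  induction w with
  | nil => simp [s2, pc]
  | cons y w ih =>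
    have hy := hletters y (by simp)
    have hw : ∀ z ∈ w, 1 ≤ z ∧ z ≤ 3 := fun z hz => hletters z (List.mem_cons_of_mem _ hz)
    rw [s2_cons, ih hw, pc]
    congr 1
    by_cases hyu : y = u
    · rw [if_pos hyu]
      rw [s1_congr w (q' := fun z => z = v)
        (fun z hz => by
          have hzb := hw z hz
          rw [hp y z hy.1 hy.2 hzb.1 hzb.2]; subst hyu; tauto)]
      exact s1_count v w
    · rw [if_neg hyu]
      have : s1 (p y) w = s1 (fun _ => False) w := by
        refine s1_congr w (fun z hz => ?_)
        have hzb := hw z hz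
        rw [hp y z hy.1 hy.2 hzb.1 hzb.2]
        simp [hyu]
      rw [this]; simp [s1]

lemma pc_compl (u v : ℕ) (huv : u ≠ v) (w : List ℕ) :
    pc u v w + pc v u w = w.count u * w.count v := by
  induction w with
  | nil => simp [pc]
  | cons y w ih =>
    rw [pc, pc, List.count_cons, List.count_cons]
    rcases eq_or_ne y u with hu | hu <;> rcases eq_or_ne y v with hv | hv
    · exact absurd (hu.symm.trans hv) huv
    · subst hu
      simp only [if_pos rfl, if_neg hv, beq_self_eq_true, beq_iff_eq, hv, if_true, if_false]
      ring_nf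
      ring_nf at ih
      linarith [ih]
    · subst hv
      simp only [if_neg hu, if_pos rfl, beq_self_eq_true, beq_iff_eq, hu, if_true, if_false]
      ring_nf
      ring_nf at ih
      linarith [ih]
    · simp only [if_neg hu, if_neg hv, beq_iff_eq, hu, hv, if_false]
      ring_nf
      ring_nf at ih
      linarith [ih]

def DD (w : List ℕ) : ℤ :=
  ((pc 1 2 w : ℤ) + pc 2 3 w + pc 3 1 w) - ((pc 2 1 w : ℤ) + pc 3 2 w + pc 1 3 w)

/-- the key word identity -/
lemma key_identity (w : List ℕ) (hletters : ∀ z ∈ w, 1 ≤ z ∧ z ≤ 3) :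
    2 * (gep w : ℤ) =
      (w.count 1 : ℤ) * w.count 2 * w.count 3
      - ((w.count 3 : ℤ) * ((pc 1 2 w : ℤ) - pc 2 1 w)
        + (w.count 1 : ℤ) * ((pc 2 3 w : ℤ) - pc 3 2 w)
        + (w.count 2 : ℤ) * ((pc 3 1 w : ℤ) - pc 1 3 w)) := by
  induction w with
  | nil => simp [gep, pc]
  | cons x w ih =>
    have hx := hletters x (by simp)
    have hw : ∀ z ∈ w, 1 ≤ z ∧ z ≤ 3 := fun z hz => hletters z (List.mem_cons_of_mem _ hz)
    have ihw := ih hw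
    rw [gep_cons]
    simp only [pc, List.count_cons]
    have h1 : x = 1 ∨ x = 2 ∨ x = 3 := by omega
    rcases h1 with h | h | h <;> subst h
    · have hs : s2 (odd3 1) w = pc 3 2 w := by
        refine s2_eq_pc _ 3 2 w hw (fun y z h1 h2 h3 h4 => ?_)
        unfold odd3; omega
      have comp : (pc 2 3 w : ℤ) + pc 3 2 w = (w.count 2 : ℤ) * w.count 3 := by
        exact_mod_cast congrArg (Nat.cast : ℕ → ℤ) (pc_compl 2 3 (by norm_num) w)
      rw [hs]
      simp only [show ((1:ℕ) = 1) = True from by simp, show ((1:ℕ) = 2) = False from by simp,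
        show ((1:ℕ) = 3) = False from by simp, if_true, if_false,
        show ((1:ℕ) == 1) = true from by simp, show ((1:ℕ) == 2) = false from by simp,
        show ((1:ℕ) == 3) = false from by simp]
      push_cast
      linear_combination ihw + comp
    · have hs : s2 (odd3 2) w = pc 1 3 w := by
        refine s2_eq_pc _ 1 3 w hw (fun y z h1 h2 h3 h4 => ?_)
        unfold odd3; omega
      have comp : (pc 3 1 w : ℤ) + pc 1 3 w = (w.count 3 : ℤ) * w.count 1 := by
        exact_mod_cast congrArg (Nat.cast : ℕ → ℤ) (pc_compl 3 1 (by norm_num) w)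
      rw [hs]
      simp only [show ((2:ℕ) = 1) = False from by simp, show ((2:ℕ) = 2) = True from by simp,
        show ((2:ℕ) = 3) = False from by simp, if_true, if_false,
        show ((2:ℕ) == 1) = false from by simp, show ((2:ℕ) == 2) = true from by simp,
        show ((2:ℕ) == 3) = false from by simp]
      push_cast
      linear_combination ihw + comp
    · have hs : s2 (odd3 3) w = pc 2 1 w := by
        refine s2_eq_pc _ 2 1 w hw (fun y z h1 h2 h3 h4 => ?_)
        unfold odd3; omega
      have comp : (pc 1 2 w : ℤ) + pc 2 1 w = (w.count 1 : ℤ) * w.count 2 := by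
        exact_mod_cast congrArg (Nat.cast : ℕ → ℤ) (pc_compl 1 2 (by norm_num) w)
      rw [hs]
      simp only [show ((3:ℕ) = 1) = False from by simp, show ((3:ℕ) = 2) = False from by simp,
        show ((3:ℕ) = 3) = True from by simp, if_true, if_false,
        show ((3:ℕ) == 1) = false from by simp, show ((3:ℕ) == 2) = false from by simp,
        show ((3:ℕ) == 3) = true from by simp]
      push_cast
      linear_combination ihw + comp



lemma mem_W_iff {a b c : ℕ} {w : List ℕ} :
    w ∈ W a b c ↔ ∀ x, w.count x =
      (if x = 1 then a else if x = 2 then b else if x = 3 then c else 0) := by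
  rw [W, List.mem_toFinset, List.mem_permutations, List.perm_iff_count]
  constructor <;> intro h x <;> have hx := h x <;>
    simp only [List.count_append, List.count_replicate] at * <;>
    rcases (by omega : x = 1 ∨ x = 2 ∨ x = 3 ∨ (¬ x = 1 ∧ ¬ x = 2 ∧ ¬ x = 3)) with
      rfl | rfl | rfl | ⟨h1, h2, h3⟩ <;>
    simp_all [Ne.symm]

lemma count_of_mem_W {a b c : ℕ} {w : List ℕ} (h : w ∈ W a b c) :
    w.count 1 = a ∧ w.count 2 = b ∧ w.count 3 = c := by
  rw [mem_W_iff] at h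
  exact ⟨by simpa using h 1, by simpa using h 2, by simpa using h 3⟩

lemma letters_of_mem_W {a b c : ℕ} {w : List ℕ} (h : w ∈ W a b c) :
    ∀ z ∈ w, 1 ≤ z ∧ z ≤ 3 := by
  intro z hz
  rw [mem_W_iff] at h
  by_contra hc
  have h1 : ¬ (z = 1) ∧ ¬ (z = 2) ∧ ¬ (z = 3) := by omega
  have hz2 := h z
  rw [if_neg h1.1, if_neg h1.2.1, if_neg h1.2.2] at hz2
  have : 0 < w.count z := List.count_pos_iff.2 hz
  omega

lemma length_of_mem_W {a b c : ℕ} {w : List ℕ} (h : w ∈ W a b c) :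
    w.length = a + b + c := by
  rw [W, List.mem_toFinset, List.mem_permutations] at h
  have := h.length_eq
  simp at this
  omega

lemma cons_mem_W₁ {a b c : ℕ} {w : List ℕ} : (1 :: w) ∈ W (a+1) b c ↔ w ∈ W a b c := by
  simp only [mem_W_iff, List.count_cons]
  constructor <;> intro h x <;> have hx := h x <;>
    rcases (by omega : x = 1 ∨ ¬ x = 1) with rfl | h1 <;> simp_all [Ne.symm]

lemma cons_mem_W₂ {a b c : ℕ} {w : List ℕ} : (2 :: w) ∈ W a (b+1) c ↔ w ∈ W a b c := by
  simp only [mem_W_iff, List.count_cons]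
  constructor <;> intro h x <;> have hx := h x <;>
    rcases (by omega : x = 1 ∨ x = 2 ∨ (¬ x = 1 ∧ ¬ x = 2)) with rfl | rfl | ⟨h1, h2⟩ <;>
      simp_all [Ne.symm]

lemma cons_mem_W₃ {a b c : ℕ} {w : List ℕ} : (3 :: w) ∈ W a b (c+1) ↔ w ∈ W a b c := by
  simp only [mem_W_iff, List.count_cons]
  constructor <;> intro h x <;> have hx := h x <;>
    rcases (by omega : x = 1 ∨ x = 2 ∨ x = 3 ∨ (¬ x = 1 ∧ ¬ x = 2 ∧ ¬ x = 3)) with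
      rfl | rfl | rfl | ⟨h1, h2, h3⟩ <;> simp_all [Ne.symm]

lemma W_zero : W 0 0 0 = {([] : List ℕ)} := by
  ext w
  simp only [mem_W_iff, Finset.mem_singleton]
  constructor
  · intro h
    rcases w with _ | ⟨y, t⟩
    · rfl
    · exfalso
      have hy := h y
      have hc : (y :: t).count y ≠ 0 := by simp [List.count_cons]
      rcases eq_or_ne y 1 with rfl | h1
      · simp at hy
      rcases eq_or_ne y 2 with rfl | h2
      · simp at hy
      rcases eq_or_ne y 3 with rfl | h3
      · simp at hy
      rw [if_neg h1, if_neg h2, if_neg h3] at hy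
      omega
  · rintro rfl x; simp

lemma cons_headI_tail' {w : List ℕ} (h : w ≠ []) : w.headI :: w.tail = w := by
  cases w with
  | nil => exact absurd rfl h
  | cons y t => rfl

lemma headI_mem' {w : List ℕ} (h : w ≠ []) : w.headI ∈ w := by
  cases w with
  | nil => exact absurd rfl h
  | cons y t => simp

lemma headI_mem_W {a b c : ℕ} {w : List ℕ} (h : w ∈ W a b c) (hn : a + b + c ≠ 0) :
    w.headI = 1 ∨ w.headI = 2 ∨ w.headI = 3 := by
  have hl := length_of_mem_W h
  have hne : w ≠ [] := by
    intro hw; rw [hw] at hl; simp at hl; omega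
  have hmem : w.headI ∈ w := headI_mem' hne
  have := letters_of_mem_W h _ hmem
  omega

lemma W_ne_nil {a b c : ℕ} {w : List ℕ} (h : w ∈ W a b c) (hn : a + b + c ≠ 0) : w ≠ [] := by
  intro hw
  have hl := length_of_mem_W h
  rw [hw] at hl; simp at hl; omega

lemma sum_W_filter₁ (a b c : ℕ) (f : List ℕ → ℝ) :
    ∑ w ∈ (W (a+1) b c).filter (fun w => w.headI = 1), f w = ∑ w ∈ W a b c, f (1 :: w) := by
  refine Finset.sum_nbij' (i := fun w => w.tail) (j := fun w => (1 :: w)) ?_ ?_ ?_ ?_ ?_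
  · intro w hw
    rw [Finset.mem_filter] at hw
    have hne : w ≠ [] := W_ne_nil hw.1 (by omega)
    have hrep : w = 1 :: w.tail := by
      conv_lhs => rw [← cons_headI_tail' hne]
      rw [hw.2]
    rw [hrep] at hw
    exact cons_mem_W₁.1 hw.1
  · intro w hw
    rw [Finset.mem_filter]
    exact ⟨cons_mem_W₁.2 hw, rfl⟩
  · intro w hw
    rw [Finset.mem_filter] at hw
    have hne : w ≠ [] := W_ne_nil hw.1 (by omega)
    conv_rhs => rw [← cons_headI_tail' hne]
    rw [hw.2]
  · intro w _; rfl
  · intro w hw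
    rw [Finset.mem_filter] at hw
    have hne : w ≠ [] := W_ne_nil hw.1 (by omega)
    have hrep : w = 1 :: w.tail := by
      conv_lhs => rw [← cons_headI_tail' hne]
      rw [hw.2]
    exact congrArg f hrep

lemma sum_W_filter₂ (a b c : ℕ) (f : List ℕ → ℝ) :
    ∑ w ∈ (W a (b+1) c).filter (fun w => w.headI = 2), f w = ∑ w ∈ W a b c, f (2 :: w) := by
  refine Finset.sum_nbij' (i := fun w => w.tail) (j := fun w => (2 :: w)) ?_ ?_ ?_ ?_ ?_
  · intro w hw
    rw [Finset.mem_filter] at hw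
    have hne : w ≠ [] := W_ne_nil hw.1 (by omega)
    have hrep : w = 2 :: w.tail := by
      conv_lhs => rw [← cons_headI_tail' hne]
      rw [hw.2]
    rw [hrep] at hw
    exact cons_mem_W₂.1 hw.1
  · intro w hw
    rw [Finset.mem_filter]
    exact ⟨cons_mem_W₂.2 hw, rfl⟩
  · intro w hw
    rw [Finset.mem_filter] at hw
    have hne : w ≠ [] := W_ne_nil hw.1 (by omega)
    conv_rhs => rw [← cons_headI_tail' hne]
    rw [hw.2]
  · intro w _; rfl
  · intro w hw
    rw [Finset.mem_filter] at hw
    have hne : w ≠ [] := W_ne_nil hw.1 (by omega)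
    have hrep : w = 2 :: w.tail := by
      conv_lhs => rw [← cons_headI_tail' hne]
      rw [hw.2]
    exact congrArg f hrep

lemma sum_W_filter₃ (a b c : ℕ) (f : List ℕ → ℝ) :
    ∑ w ∈ (W a b (c+1)).filter (fun w => w.headI = 3), f w = ∑ w ∈ W a b c, f (3 :: w) := by
  refine Finset.sum_nbij' (i := fun w => w.tail) (j := fun w => (3 :: w)) ?_ ?_ ?_ ?_ ?_
  · intro w hw
    rw [Finset.mem_filter] at hw
    have hne : w ≠ [] := W_ne_nil hw.1 (by omega)
    have hrep : w = 3 :: w.tail := by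
      conv_lhs => rw [← cons_headI_tail' hne]
      rw [hw.2]
    rw [hrep] at hw
    exact cons_mem_W₃.1 hw.1
  · intro w hw
    rw [Finset.mem_filter]
    exact ⟨cons_mem_W₃.2 hw, rfl⟩
  · intro w hw
    rw [Finset.mem_filter] at hw
    have hne : w ≠ [] := W_ne_nil hw.1 (by omega)
    conv_rhs => rw [← cons_headI_tail' hne]
    rw [hw.2]
  · intro w _; rfl
  · intro w hw
    rw [Finset.mem_filter] at hw
    have hne : w ≠ [] := W_ne_nil hw.1 (by omega)
    have hrep : w = 3 :: w.tail := by
      conv_lhs => rw [← cons_headI_tail' hne]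
      rw [hw.2]
    exact congrArg f hrep

lemma filter_head_zero₁ (b c : ℕ) :
    (W 0 b c).filter (fun w => w.headI = 1) = ∅ := by
  rw [Finset.filter_eq_empty_iff]
  intro w hw hh
  have hne : w ≠ [] := by
    intro h; rw [h] at hh; simp [List.headI] at hh
  have : w.headI ∈ w := headI_mem' hne
  rw [hh] at this
  have := (count_of_mem_W hw).1
  have : 0 < w.count 1 := List.count_pos_iff.2 ‹(1:ℕ) ∈ w›
  omega

lemma filter_head_zero₂ (a c : ℕ) :
    (W a 0 c).filter (fun w => w.headI = 2) = ∅ := by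
  rw [Finset.filter_eq_empty_iff]
  intro w hw hh
  have hne : w ≠ [] := by
    intro h; rw [h] at hh; simp [List.headI] at hh
  have : w.headI ∈ w := headI_mem' hne
  rw [hh] at this
  have := (count_of_mem_W hw).2.1
  have : 0 < w.count 2 := List.count_pos_iff.2 ‹(2:ℕ) ∈ w›
  omega

lemma filter_head_zero₃ (a b : ℕ) :
    (W a b 0).filter (fun w => w.headI = 3) = ∅ := by
  rw [Finset.filter_eq_empty_iff]
  intro w hw hh
  have hne : w ≠ [] := by
    intro h; rw [h] at hh; simp [List.headI] at hh
  have : w.headI ∈ w := headI_mem' hne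
  rw [hh] at this
  have := (count_of_mem_W hw).2.2
  have : 0 < w.count 3 := List.count_pos_iff.2 ‹(3:ℕ) ∈ w›
  omega

lemma sum_W_split (a b c : ℕ) (hn : a + b + c ≠ 0) (f : List ℕ → ℝ) :
    ∑ w ∈ W a b c, f w
      = ∑ w ∈ (W a b c).filter (fun w => w.headI = 1), f w
      + ∑ w ∈ (W a b c).filter (fun w => w.headI = 2), f w
      + ∑ w ∈ (W a b c).filter (fun w => w.headI = 3), f w := by
  have key : ∀ w ∈ W a b c, w.headI = 1 ∨ w.headI = 2 ∨ w.headI = 3 :=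
    fun w hw => headI_mem_W hw hn
  rw [add_assoc, ← Finset.sum_filter_add_sum_filter_not (W a b c) (fun w => w.headI = 1) f]
  congr 1
  rw [← Finset.sum_filter_add_sum_filter_not ((W a b c).filter (fun w => ¬ w.headI = 1))
      (fun w => w.headI = 2) f]
  congr 1
  · apply Finset.sum_congr _ (fun _ _ => rfl)
    rw [Finset.filter_filter]
    apply Finset.filter_congr
    intro w _
    constructor
    · exact fun h => h.2
    · intro h; exact ⟨by omega, h⟩
  · apply Finset.sum_congr _ (fun _ _ => rfl)
    rw [Finset.filter_filter]
    apply Finset.filter_congr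
    intro w hw
    have := key w hw
    constructor
    · intro h; omega
    · intro h; omega

noncomputable def mu (a b c : ℕ) : ℝ :=
  (Nat.factorial (a+b+c)) / (a.factorial * b.factorial * c.factorial)

lemma mu_pos (a b c : ℕ) : 0 < mu a b c := by
  apply div_pos
  · exact_mod_cast Nat.factorial_pos _
  · positivity

lemma mu_pred₁ (a b c : ℕ) :
    mu a b c = mu (a+1) b c * ((a:ℝ)+1) / ((a:ℝ)+b+c+1) := by
  unfold mu
  have h1 : a+1+b+c = (a+b+c)+1 := by omega
  rw [h1, Nat.factorial_succ, Nat.factorial_succ]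
  have h2 : (0:ℝ) < (a.factorial : ℝ) := by exact_mod_cast Nat.factorial_pos _
  have h3 : (0:ℝ) < (b.factorial : ℝ) := by exact_mod_cast Nat.factorial_pos _
  have h4 : (0:ℝ) < (c.factorial : ℝ) := by exact_mod_cast Nat.factorial_pos _
  have h5 : (0:ℝ) < ((a+b+c).factorial : ℝ) := by exact_mod_cast Nat.factorial_pos _
  field_simp
  push_cast
  ring

lemma mu_pred₂ (a b c : ℕ) :
    mu a b c = mu a (b+1) c * ((b:ℝ)+1) / ((a:ℝ)+b+c+1) := by
  unfold mu
  have h1 : a+(b+1)+c = (a+b+c)+1 := by omega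
  rw [h1, Nat.factorial_succ, Nat.factorial_succ]
  have h2 : (0:ℝ) < (a.factorial : ℝ) := by exact_mod_cast Nat.factorial_pos _
  have h3 : (0:ℝ) < (b.factorial : ℝ) := by exact_mod_cast Nat.factorial_pos _
  have h4 : (0:ℝ) < (c.factorial : ℝ) := by exact_mod_cast Nat.factorial_pos _
  have h5 : (0:ℝ) < ((a+b+c).factorial : ℝ) := by exact_mod_cast Nat.factorial_pos _
  field_simp
  push_cast
  ring

lemma mu_pred₃ (a b c : ℕ) :
    mu a b c = mu a b (c+1) * ((c:ℝ)+1) / ((a:ℝ)+b+c+1) := by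
  unfold mu
  have h1 : a+b+(c+1) = (a+b+c)+1 := by omega
  rw [h1, Nat.factorial_succ, Nat.factorial_succ]
  have h2 : (0:ℝ) < (a.factorial : ℝ) := by exact_mod_cast Nat.factorial_pos _
  have h3 : (0:ℝ) < (b.factorial : ℝ) := by exact_mod_cast Nat.factorial_pos _
  have h4 : (0:ℝ) < (c.factorial : ℝ) := by exact_mod_cast Nat.factorial_pos _
  have h5 : (0:ℝ) < ((a+b+c).factorial : ℝ) := by exact_mod_cast Nat.factorial_pos _
  field_simp
  push_cast
  ring

/-- E[D^2] over W(a,b,c) -/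
noncomputable def E2r (a b c : ℝ) : ℝ :=
  (a*b+b*c+c*a) * (1+(a+b+c)) / 3 - 3*(a*b*c)

/-- E[D^4] over W(a,b,c) -/
noncomputable def E4r (a b c : ℝ) : ℝ :=
  -2*(a*b*c) + 27*(a*b*c)^2 - 84/5*((a*b+b*c+c*a)*(a*b*c)) + 7/15*(a*b+b*c+c*a)^2
  + 12/5*((a+b+c)*(a*b*c)) - 2/15*((a+b+c)*(a*b+b*c+c*a))
  - 6*((a+b+c)*(a*b+b*c+c*a)*(a*b*c)) + 4/5*((a+b+c)*(a*b+b*c+c*a)^2)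
  + 22/5*((a+b+c)^2*(a*b*c)) - 4/15*((a+b+c)^2*(a*b+b*c+c*a))
  + 1/3*((a+b+c)^2*(a*b+b*c+c*a)^2) - 2/15*((a+b+c)^3*(a*b+b*c+c*a))

lemma DD_cons₁ (w : List ℕ) : DD (1 :: w) = DD w + (w.count 2 : ℤ) - (w.count 3 : ℤ) := by
  simp only [DD, pc]
  norm_num
  push_cast
  ring

lemma DD_cons₂ (w : List ℕ) : DD (2 :: w) = DD w + (w.count 3 : ℤ) - (w.count 1 : ℤ) := by
  simp only [DD, pc]
  norm_num
  push_cast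
  ring

lemma DD_cons₃ (w : List ℕ) : DD (3 :: w) = DD w + (w.count 1 : ℤ) - (w.count 2 : ℤ) := by
  simp only [DD, pc]
  norm_num
  push_cast
  ring

noncomputable def S (k a b c : ℕ) : ℝ := ∑ w ∈ W a b c, ((DD w : ℝ)) ^ k

lemma sum_shift (s : Finset (List ℕ)) (g : List ℕ → ℝ) (δ : ℝ) (k : ℕ) :
    ∑ w ∈ s, (g w + δ)^k
      = ∑ j ∈ Finset.range (k+1), (Nat.choose k j : ℝ) * δ^(k-j) * ∑ w ∈ s, g w ^ j := by
  rw [Finset.sum_congr rfl (fun w _ => add_pow (g w) δ k)]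
  rw [Finset.sum_comm]
  refine Finset.sum_congr rfl (fun j _ => ?_)
  rw [Finset.mul_sum]
  refine Finset.sum_congr rfl (fun w _ => by ring)

lemma S_rec (k a b c : ℕ) (hn : a + b + c ≠ 0) :
    S k a b c
      = (if a = 0 then 0 else
          ∑ j ∈ Finset.range (k+1), (Nat.choose k j : ℝ) * ((b:ℝ)-c)^(k-j) * S j (a-1) b c)
      + (if b = 0 then 0 else
          ∑ j ∈ Finset.range (k+1), (Nat.choose k j : ℝ) * ((c:ℝ)-a)^(k-j) * S j a (b-1) c)
      + (if c = 0 then 0 else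
          ∑ j ∈ Finset.range (k+1), (Nat.choose k j : ℝ) * ((a:ℝ)-b)^(k-j) * S j a b (c-1)) := by
  rw [S, sum_W_split a b c hn]
  congr 1
  congr 1
  · -- branch 1
    rcases a with _ | a'
    · rw [if_pos rfl, filter_head_zero₁, Finset.sum_empty]
    · rw [if_neg (Nat.succ_ne_zero a'), sum_W_filter₁]
      have hstep : ∀ w ∈ W a' b c, ((DD (1::w) : ℝ))^k = ((DD w : ℝ) + ((b:ℝ)-c))^k := by
        intro w hw
        have hc := count_of_mem_W hw
        have : (DD (1::w) : ℝ) = (DD w : ℝ) + ((b:ℝ)-c) := by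
          rw [DD_cons₁, hc.2.1, hc.2.2]
          push_cast
          ring
        rw [this]
      rw [Finset.sum_congr rfl hstep, sum_shift]
      simp only [Nat.succ_sub_one]
      rfl
  · rcases b with _ | b'
    · rw [if_pos rfl, filter_head_zero₂, Finset.sum_empty]
    · rw [if_neg (Nat.succ_ne_zero b'), sum_W_filter₂]
      have hstep : ∀ w ∈ W a b' c, ((DD (2::w) : ℝ))^k = ((DD w : ℝ) + ((c:ℝ)-a))^k := by
        intro w hw
        have hc := count_of_mem_W hw
        have : (DD (2::w) : ℝ) = (DD w : ℝ) + ((c:ℝ)-a) := by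
          rw [DD_cons₂, hc.1, hc.2.2]
          push_cast
          ring
        rw [this]
      rw [Finset.sum_congr rfl hstep, sum_shift]
      simp only [Nat.succ_sub_one]
      rfl
  · rcases c with _ | c'
    · rw [if_pos rfl, filter_head_zero₃, Finset.sum_empty]
    · rw [if_neg (Nat.succ_ne_zero c'), sum_W_filter₃]
      have hstep : ∀ w ∈ W a b c', ((DD (3::w) : ℝ))^k = ((DD w : ℝ) + ((a:ℝ)-b))^k := by
        intro w hw
        have hc := count_of_mem_W hw
        have : (DD (3::w) : ℝ) = (DD w : ℝ) + ((a:ℝ)-b) := by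
          rw [DD_cons₃, hc.1, hc.2.1]
          push_cast
          ring
        rw [this]
      rw [Finset.sum_congr rfl hstep, sum_shift]
      simp only [Nat.succ_sub_one]
      rfl

lemma mu_pred₁' (a b c : ℕ) (M : ℝ) (hM : (a:ℝ)+b+c+1 = M) :
    mu a b c = mu (a+1) b c * ((a:ℝ)+1) / M := by rw [← hM]; exact mu_pred₁ a b c

lemma mu_pred₂' (a b c : ℕ) (M : ℝ) (hM : (a:ℝ)+b+c+1 = M) :
    mu a b c = mu a (b+1) c * ((b:ℝ)+1) / M := by rw [← hM]; exact mu_pred₂ a b c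

lemma mu_pred₃' (a b c : ℕ) (M : ℝ) (hM : (a:ℝ)+b+c+1 = M) :
    mu a b c = mu a b (c+1) * ((c:ℝ)+1) / M := by rw [← hM]; exact mu_pred₃ a b c


lemma chv40 : Nat.choose 4 0 = 1 := rfl
lemma chv41 : Nat.choose 4 1 = 4 := rfl
lemma chv42 : Nat.choose 4 2 = 6 := rfl
lemma chv43 : Nat.choose 4 3 = 4 := rfl
lemma chv44 : Nat.choose 4 4 = 1 := rfl
lemma chv30 : Nat.choose 3 0 = 1 := rfl
lemma chv31 : Nat.choose 3 1 = 3 := rfl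
lemma chv32 : Nat.choose 3 2 = 3 := rfl
lemma chv33 : Nat.choose 3 3 = 1 := rfl
lemma chv20 : Nat.choose 2 0 = 1 := rfl
lemma chv21 : Nat.choose 2 1 = 2 := rfl
lemma chv22 : Nat.choose 2 2 = 1 := rfl
lemma chv10 : Nat.choose 1 0 = 1 := rfl
lemma chv11 : Nat.choose 1 1 = 1 := rfl
lemma chv00 : Nat.choose 0 0 = 1 := rfl

set_option maxHeartbeats 6000000 in
theorem moments (s : ℕ) : ∀ a b c : ℕ, a + b + c = s →
    S 0 a b c = mu a b c ∧ S 1 a b c = 0 ∧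
    S 2 a b c = E2r a b c * mu a b c ∧ S 3 a b c = 0 ∧
    S 4 a b c = E4r a b c * mu a b c := by
  induction s using Nat.strong_induction_on with
  | _ s ih =>
  intro a b c hs
  rcases Nat.eq_zero_or_pos s with hs0 | hspos
  · have ha : a = 0 := by omega
    have hb : b = 0 := by omega
    have hc : c = 0 := by omega
    subst ha; subst hb; subst hc
    have hW : W 0 0 0 = {([] : List ℕ)} := W_zero
    have hDD : DD ([] : List ℕ) = 0 := by simp [DD, pc]
    refine ⟨?_, ?_, ?_, ?_, ?_⟩ <;>
      simp [S, hW, hDD, mu, E2r, E4r, Nat.factorial]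
  · have hn : a + b + c ≠ 0 := by omega
    have hsne : (s:ℝ) ≠ 0 := Nat.cast_ne_zero.mpr (by omega)
    rcases a with _ | a' <;> rcases b with _ | b' <;> rcases c with _ | c'
    · exfalso; omega
    · -- case 0 0 (c'+1)
      have hsub : (s:ℝ) = (c':ℝ) + 1 := by
        have := hs; push_cast [← this]; ring
      have hMne : (c':ℝ) + (1:ℝ) ≠ 0 := by positivity
      obtain ⟨C0,C1,C2,C3,C4⟩ := ih (0 + 0 + c') (by omega) 0 0 c' rfl
      have hmuC : mu 0 0 c' = mu 0 0 (c'+1) * ((c':ℝ)+1) / (s:ℝ) :=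
        mu_pred₃' _ _ _ _ (by push_cast [hsub]; ring)
      refine ⟨?_, ?_, ?_, ?_, ?_⟩
      · rw [S_rec 0 0 0 (c'+1) hn]
        norm_num [Finset.sum_range_succ, chv40, chv41, chv42, chv43, chv44,
          chv30, chv31, chv32, chv33, chv20, chv21, chv22, chv10, chv11, chv00]
        all_goals try simp only [chv40, chv41, chv42, chv43, chv44,
          chv30, chv31, chv32, chv33, chv20, chv21, chv22, chv10, chv11, chv00,
          Nat.cast_ofNat, Nat.cast_one]
        all_goals simp only [C0, C1, C2, C3, C4, hmuC, E2r, E4r]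
        all_goals try rw [hsub]
        all_goals push_cast
        all_goals try field_simp
        all_goals ring
      · rw [S_rec 1 0 0 (c'+1) hn]
        norm_num [Finset.sum_range_succ, chv40, chv41, chv42, chv43, chv44,
          chv30, chv31, chv32, chv33, chv20, chv21, chv22, chv10, chv11, chv00]
        all_goals try simp only [chv40, chv41, chv42, chv43, chv44,
          chv30, chv31, chv32, chv33, chv20, chv21, chv22, chv10, chv11, chv00,
          Nat.cast_ofNat, Nat.cast_one]
        all_goals simp only [C0, C1, C2, C3, C4, hmuC, E2r, E4r]
        all_goals try rw [hsub]
        all_goals push_cast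
        all_goals try field_simp
        all_goals ring
      · rw [S_rec 2 0 0 (c'+1) hn]
        norm_num [Finset.sum_range_succ, chv40, chv41, chv42, chv43, chv44,
          chv30, chv31, chv32, chv33, chv20, chv21, chv22, chv10, chv11, chv00]
        all_goals try simp only [chv40, chv41, chv42, chv43, chv44,
          chv30, chv31, chv32, chv33, chv20, chv21, chv22, chv10, chv11, chv00,
          Nat.cast_ofNat, Nat.cast_one]
        all_goals simp only [C0, C1, C2, C3, C4, hmuC, E2r, E4r]
        all_goals try rw [hsub]
        all_goals push_cast
        all_goals try field_simp
        all_goals ring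
      · rw [S_rec 3 0 0 (c'+1) hn]
        norm_num [Finset.sum_range_succ, chv40, chv41, chv42, chv43, chv44,
          chv30, chv31, chv32, chv33, chv20, chv21, chv22, chv10, chv11, chv00]
        all_goals try simp only [chv40, chv41, chv42, chv43, chv44,
          chv30, chv31, chv32, chv33, chv20, chv21, chv22, chv10, chv11, chv00,
          Nat.cast_ofNat, Nat.cast_one]
        all_goals simp only [C0, C1, C2, C3, C4, hmuC, E2r, E4r]
        all_goals try rw [hsub]
        all_goals push_cast
        all_goals try field_simp
        all_goals ring
      · rw [S_rec 4 0 0 (c'+1) hn]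
        norm_num [Finset.sum_range_succ, chv40, chv41, chv42, chv43, chv44,
          chv30, chv31, chv32, chv33, chv20, chv21, chv22, chv10, chv11, chv00]
        all_goals try simp only [chv40, chv41, chv42, chv43, chv44,
          chv30, chv31, chv32, chv33, chv20, chv21, chv22, chv10, chv11, chv00,
          Nat.cast_ofNat, Nat.cast_one]
        all_goals simp only [C0, C1, C2, C3, C4, hmuC, E2r, E4r]
        all_goals try rw [hsub]
        all_goals push_cast
        all_goals try field_simp
        all_goals ring
    · -- case 0 (b'+1) 0
      have hsub : (s:ℝ) = (b':ℝ) + 1 := by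
        have := hs; push_cast [← this]; ring
      have hMne : (b':ℝ) + (1:ℝ) ≠ 0 := by positivity
      obtain ⟨B0,B1,B2,B3,B4⟩ := ih (0 + b' + 0) (by omega) 0 b' 0 rfl
      have hmuB : mu 0 b' 0 = mu 0 (b'+1) 0 * ((b':ℝ)+1) / (s:ℝ) :=
        mu_pred₂' _ _ _ _ (by push_cast [hsub]; ring)
      refine ⟨?_, ?_, ?_, ?_, ?_⟩
      · rw [S_rec 0 0 (b'+1) 0 hn]
        norm_num [Finset.sum_range_succ, chv40, chv41, chv42, chv43, chv44,
          chv30, chv31, chv32, chv33, chv20, chv21, chv22, chv10, chv11, chv00]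
        all_goals try simp only [chv40, chv41, chv42, chv43, chv44,
          chv30, chv31, chv32, chv33, chv20, chv21, chv22, chv10, chv11, chv00,
          Nat.cast_ofNat, Nat.cast_one]
        all_goals simp only [B0, B1, B2, B3, B4, hmuB, E2r, E4r]
        all_goals try rw [hsub]
        all_goals push_cast
        all_goals try field_simp
        all_goals ring
      · rw [S_rec 1 0 (b'+1) 0 hn]
        norm_num [Finset.sum_range_succ, chv40, chv41, chv42, chv43, chv44,
          chv30, chv31, chv32, chv33, chv20, chv21, chv22, chv10, chv11, chv00]
        all_goals try simp only [chv40, chv41, chv42, chv43, chv44,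
          chv30, chv31, chv32, chv33, chv20, chv21, chv22, chv10, chv11, chv00,
          Nat.cast_ofNat, Nat.cast_one]
        all_goals simp only [B0, B1, B2, B3, B4, hmuB, E2r, E4r]
        all_goals try rw [hsub]
        all_goals push_cast
        all_goals try field_simp
        all_goals ring
      · rw [S_rec 2 0 (b'+1) 0 hn]
        norm_num [Finset.sum_range_succ, chv40, chv41, chv42, chv43, chv44,
          chv30, chv31, chv32, chv33, chv20, chv21, chv22, chv10, chv11, chv00]
        all_goals try simp only [chv40, chv41, chv42, chv43, chv44,
          chv30, chv31, chv32, chv33, chv20, chv21, chv22, chv10, chv11, chv00,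
          Nat.cast_ofNat, Nat.cast_one]
        all_goals simp only [B0, B1, B2, B3, B4, hmuB, E2r, E4r]
        all_goals try rw [hsub]
        all_goals push_cast
        all_goals try field_simp
        all_goals ring
      · rw [S_rec 3 0 (b'+1) 0 hn]
        norm_num [Finset.sum_range_succ, chv40, chv41, chv42, chv43, chv44,
          chv30, chv31, chv32, chv33, chv20, chv21, chv22, chv10, chv11, chv00]
        all_goals try simp only [chv40, chv41, chv42, chv43, chv44,
          chv30, chv31, chv32, chv33, chv20, chv21, chv22, chv10, chv11, chv00,
          Nat.cast_ofNat, Nat.cast_one]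
        all_goals simp only [B0, B1, B2, B3, B4, hmuB, E2r, E4r]
        all_goals try rw [hsub]
        all_goals push_cast
        all_goals try field_simp
        all_goals ring
      · rw [S_rec 4 0 (b'+1) 0 hn]
        norm_num [Finset.sum_range_succ, chv40, chv41, chv42, chv43, chv44,
          chv30, chv31, chv32, chv33, chv20, chv21, chv22, chv10, chv11, chv00]
        all_goals try simp only [chv40, chv41, chv42, chv43, chv44,
          chv30, chv31, chv32, chv33, chv20, chv21, chv22, chv10, chv11, chv00,
          Nat.cast_ofNat, Nat.cast_one]
        all_goals simp only [B0, B1, B2, B3, B4, hmuB, E2r, E4r]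
        all_goals try rw [hsub]
        all_goals push_cast
        all_goals try field_simp
        all_goals ring
    · -- case 0 (b'+1) (c'+1)
      have hsub : (s:ℝ) = (b':ℝ) + (c':ℝ) + 2 := by
        have := hs; push_cast [← this]; ring
      have hMne : (b':ℝ) + (c':ℝ) + (2:ℝ) ≠ 0 := by positivity
      obtain ⟨B0,B1,B2,B3,B4⟩ := ih (0 + b' + (c'+1)) (by omega) 0 b' (c'+1) rfl
      have hmuB : mu 0 b' (c'+1) = mu 0 (b'+1) (c'+1) * ((b':ℝ)+1) / (s:ℝ) :=
        mu_pred₂' _ _ _ _ (by push_cast [hsub]; ring)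
      obtain ⟨C0,C1,C2,C3,C4⟩ := ih (0 + (b'+1) + c') (by omega) 0 (b'+1) c' rfl
      have hmuC : mu 0 (b'+1) c' = mu 0 (b'+1) (c'+1) * ((c':ℝ)+1) / (s:ℝ) :=
        mu_pred₃' _ _ _ _ (by push_cast [hsub]; ring)
      refine ⟨?_, ?_, ?_, ?_, ?_⟩
      · rw [S_rec 0 0 (b'+1) (c'+1) hn]
        norm_num [Finset.sum_range_succ, chv40, chv41, chv42, chv43, chv44,
          chv30, chv31, chv32, chv33, chv20, chv21, chv22, chv10, chv11, chv00]
        all_goals try simp only [chv40, chv41, chv42, chv43, chv44,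
          chv30, chv31, chv32, chv33, chv20, chv21, chv22, chv10, chv11, chv00,
          Nat.cast_ofNat, Nat.cast_one]
        all_goals simp only [B0, B1, B2, B3, B4, hmuB, C0, C1, C2, C3, C4, hmuC, E2r, E4r]
        all_goals try rw [hsub]
        all_goals push_cast
        all_goals try field_simp
        all_goals ring
      · rw [S_rec 1 0 (b'+1) (c'+1) hn]
        norm_num [Finset.sum_range_succ, chv40, chv41, chv42, chv43, chv44,
          chv30, chv31, chv32, chv33, chv20, chv21, chv22, chv10, chv11, chv00]
        all_goals try simp only [chv40, chv41, chv42, chv43, chv44,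
          chv30, chv31, chv32, chv33, chv20, chv21, chv22, chv10, chv11, chv00,
          Nat.cast_ofNat, Nat.cast_one]
        all_goals simp only [B0, B1, B2, B3, B4, hmuB, C0, C1, C2, C3, C4, hmuC, E2r, E4r]
        all_goals try rw [hsub]
        all_goals push_cast
        all_goals try field_simp
        all_goals ring
      · rw [S_rec 2 0 (b'+1) (c'+1) hn]
        norm_num [Finset.sum_range_succ, chv40, chv41, chv42, chv43, chv44,
          chv30, chv31, chv32, chv33, chv20, chv21, chv22, chv10, chv11, chv00]
        all_goals try simp only [chv40, chv41, chv42, chv43, chv44,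
          chv30, chv31, chv32, chv33, chv20, chv21, chv22, chv10, chv11, chv00,
          Nat.cast_ofNat, Nat.cast_one]
        all_goals simp only [B0, B1, B2, B3, B4, hmuB, C0, C1, C2, C3, C4, hmuC, E2r, E4r]
        all_goals try rw [hsub]
        all_goals push_cast
        all_goals try field_simp
        all_goals ring
      · rw [S_rec 3 0 (b'+1) (c'+1) hn]
        norm_num [Finset.sum_range_succ, chv40, chv41, chv42, chv43, chv44,
          chv30, chv31, chv32, chv33, chv20, chv21, chv22, chv10, chv11, chv00]
        all_goals try simp only [chv40, chv41, chv42, chv43, chv44,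
          chv30, chv31, chv32, chv33, chv20, chv21, chv22, chv10, chv11, chv00,
          Nat.cast_ofNat, Nat.cast_one]
        all_goals simp only [B0, B1, B2, B3, B4, hmuB, C0, C1, C2, C3, C4, hmuC, E2r, E4r]
        all_goals try rw [hsub]
        all_goals push_cast
        all_goals try field_simp
        all_goals ring
      · rw [S_rec 4 0 (b'+1) (c'+1) hn]
        norm_num [Finset.sum_range_succ, chv40, chv41, chv42, chv43, chv44,
          chv30, chv31, chv32, chv33, chv20, chv21, chv22, chv10, chv11, chv00]
        all_goals try simp only [chv40, chv41, chv42, chv43, chv44,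
          chv30, chv31, chv32, chv33, chv20, chv21, chv22, chv10, chv11, chv00,
          Nat.cast_ofNat, Nat.cast_one]
        all_goals simp only [B0, B1, B2, B3, B4, hmuB, C0, C1, C2, C3, C4, hmuC, E2r, E4r]
        all_goals try rw [hsub]
        all_goals push_cast
        all_goals try field_simp
        all_goals ring
    · -- case (a'+1) 0 0
      have hsub : (s:ℝ) = (a':ℝ) + 1 := by
        have := hs; push_cast [← this]; ring
      have hMne : (a':ℝ) + (1:ℝ) ≠ 0 := by positivity
      obtain ⟨A0,A1,A2,A3,A4⟩ := ih (a' + 0 + 0) (by omega) a' 0 0 rfl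
      have hmuA : mu a' 0 0 = mu (a'+1) 0 0 * ((a':ℝ)+1) / (s:ℝ) :=
        mu_pred₁' _ _ _ _ (by push_cast [hsub]; ring)
      refine ⟨?_, ?_, ?_, ?_, ?_⟩
      · rw [S_rec 0 (a'+1) 0 0 hn]
        norm_num [Finset.sum_range_succ, chv40, chv41, chv42, chv43, chv44,
          chv30, chv31, chv32, chv33, chv20, chv21, chv22, chv10, chv11, chv00]
        all_goals try simp only [chv40, chv41, chv42, chv43, chv44,
          chv30, chv31, chv32, chv33, chv20, chv21, chv22, chv10, chv11, chv00,
          Nat.cast_ofNat, Nat.cast_one]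
        all_goals simp only [A0, A1, A2, A3, A4, hmuA, E2r, E4r]
        all_goals try rw [hsub]
        all_goals push_cast
        all_goals try field_simp
        all_goals ring
      · rw [S_rec 1 (a'+1) 0 0 hn]
        norm_num [Finset.sum_range_succ, chv40, chv41, chv42, chv43, chv44,
          chv30, chv31, chv32, chv33, chv20, chv21, chv22, chv10, chv11, chv00]
        all_goals try simp only [chv40, chv41, chv42, chv43, chv44,
          chv30, chv31, chv32, chv33, chv20, chv21, chv22, chv10, chv11, chv00,
          Nat.cast_ofNat, Nat.cast_one]
        all_goals simp only [A0, A1, A2, A3, A4, hmuA, E2r, E4r]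
        all_goals try rw [hsub]
        all_goals push_cast
        all_goals try field_simp
        all_goals ring
      · rw [S_rec 2 (a'+1) 0 0 hn]
        norm_num [Finset.sum_range_succ, chv40, chv41, chv42, chv43, chv44,
          chv30, chv31, chv32, chv33, chv20, chv21, chv22, chv10, chv11, chv00]
        all_goals try simp only [chv40, chv41, chv42, chv43, chv44,
          chv30, chv31, chv32, chv33, chv20, chv21, chv22, chv10, chv11, chv00,
          Nat.cast_ofNat, Nat.cast_one]
        all_goals simp only [A0, A1, A2, A3, A4, hmuA, E2r, E4r]
        all_goals try rw [hsub]
        all_goals push_cast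
        all_goals try field_simp
        all_goals ring
      · rw [S_rec 3 (a'+1) 0 0 hn]
        norm_num [Finset.sum_range_succ, chv40, chv41, chv42, chv43, chv44,
          chv30, chv31, chv32, chv33, chv20, chv21, chv22, chv10, chv11, chv00]
        all_goals try simp only [chv40, chv41, chv42, chv43, chv44,
          chv30, chv31, chv32, chv33, chv20, chv21, chv22, chv10, chv11, chv00,
          Nat.cast_ofNat, Nat.cast_one]
        all_goals simp only [A0, A1, A2, A3, A4, hmuA, E2r, E4r]
        all_goals try rw [hsub]
        all_goals push_cast
        all_goals try field_simp
        all_goals ring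
      · rw [S_rec 4 (a'+1) 0 0 hn]
        norm_num [Finset.sum_range_succ, chv40, chv41, chv42, chv43, chv44,
          chv30, chv31, chv32, chv33, chv20, chv21, chv22, chv10, chv11, chv00]
        all_goals try simp only [chv40, chv41, chv42, chv43, chv44,
          chv30, chv31, chv32, chv33, chv20, chv21, chv22, chv10, chv11, chv00,
          Nat.cast_ofNat, Nat.cast_one]
        all_goals simp only [A0, A1, A2, A3, A4, hmuA, E2r, E4r]
        all_goals try rw [hsub]
        all_goals push_cast
        all_goals try field_simp
        all_goals ring
    · -- case (a'+1) 0 (c'+1)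
      have hsub : (s:ℝ) = (a':ℝ) + (c':ℝ) + 2 := by
        have := hs; push_cast [← this]; ring
      have hMne : (a':ℝ) + (c':ℝ) + (2:ℝ) ≠ 0 := by positivity
      obtain ⟨A0,A1,A2,A3,A4⟩ := ih (a' + 0 + (c'+1)) (by omega) a' 0 (c'+1) rfl
      have hmuA : mu a' 0 (c'+1) = mu (a'+1) 0 (c'+1) * ((a':ℝ)+1) / (s:ℝ) :=
        mu_pred₁' _ _ _ _ (by push_cast [hsub]; ring)
      obtain ⟨C0,C1,C2,C3,C4⟩ := ih ((a'+1) + 0 + c') (by omega) (a'+1) 0 c' rfl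
      have hmuC : mu (a'+1) 0 c' = mu (a'+1) 0 (c'+1) * ((c':ℝ)+1) / (s:ℝ) :=
        mu_pred₃' _ _ _ _ (by push_cast [hsub]; ring)
      refine ⟨?_, ?_, ?_, ?_, ?_⟩
      · rw [S_rec 0 (a'+1) 0 (c'+1) hn]
        norm_num [Finset.sum_range_succ, chv40, chv41, chv42, chv43, chv44,
          chv30, chv31, chv32, chv33, chv20, chv21, chv22, chv10, chv11, chv00]
        all_goals try simp only [chv40, chv41, chv42, chv43, chv44,
          chv30, chv31, chv32, chv33, chv20, chv21, chv22, chv10, chv11, chv00,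
          Nat.cast_ofNat, Nat.cast_one]
        all_goals simp only [A0, A1, A2, A3, A4, hmuA, C0, C1, C2, C3, C4, hmuC, E2r, E4r]
        all_goals try rw [hsub]
        all_goals push_cast
        all_goals try field_simp
        all_goals ring
      · rw [S_rec 1 (a'+1) 0 (c'+1) hn]
        norm_num [Finset.sum_range_succ, chv40, chv41, chv42, chv43, chv44,
          chv30, chv31, chv32, chv33, chv20, chv21, chv22, chv10, chv11, chv00]
        all_goals try simp only [chv40, chv41, chv42, chv43, chv44,
          chv30, chv31, chv32, chv33, chv20, chv21, chv22, chv10, chv11, chv00,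
          Nat.cast_ofNat, Nat.cast_one]
        all_goals simp only [A0, A1, A2, A3, A4, hmuA, C0, C1, C2, C3, C4, hmuC, E2r, E4r]
        all_goals try rw [hsub]
        all_goals push_cast
        all_goals try field_simp
        all_goals ring
      · rw [S_rec 2 (a'+1) 0 (c'+1) hn]
        norm_num [Finset.sum_range_succ, chv40, chv41, chv42, chv43, chv44,
          chv30, chv31, chv32, chv33, chv20, chv21, chv22, chv10, chv11, chv00]
        all_goals try simp only [chv40, chv41, chv42, chv43, chv44,
          chv30, chv31, chv32, chv33, chv20, chv21, chv22, chv10, chv11, chv00,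
          Nat.cast_ofNat, Nat.cast_one]
        all_goals simp only [A0, A1, A2, A3, A4, hmuA, C0, C1, C2, C3, C4, hmuC, E2r, E4r]
        all_goals try rw [hsub]
        all_goals push_cast
        all_goals try field_simp
        all_goals ring
      · rw [S_rec 3 (a'+1) 0 (c'+1) hn]
        norm_num [Finset.sum_range_succ, chv40, chv41, chv42, chv43, chv44,
          chv30, chv31, chv32, chv33, chv20, chv21, chv22, chv10, chv11, chv00]
        all_goals try simp only [chv40, chv41, chv42, chv43, chv44,
          chv30, chv31, chv32, chv33, chv20, chv21, chv22, chv10, chv11, chv00,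
          Nat.cast_ofNat, Nat.cast_one]
        all_goals simp only [A0, A1, A2, A3, A4, hmuA, C0, C1, C2, C3, C4, hmuC, E2r, E4r]
        all_goals try rw [hsub]
        all_goals push_cast
        all_goals try field_simp
        all_goals ring
      · rw [S_rec 4 (a'+1) 0 (c'+1) hn]
        norm_num [Finset.sum_range_succ, chv40, chv41, chv42, chv43, chv44,
          chv30, chv31, chv32, chv33, chv20, chv21, chv22, chv10, chv11, chv00]
        all_goals try simp only [chv40, chv41, chv42, chv43, chv44,
          chv30, chv31, chv32, chv33, chv20, chv21, chv22, chv10, chv11, chv00,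
          Nat.cast_ofNat, Nat.cast_one]
        all_goals simp only [A0, A1, A2, A3, A4, hmuA, C0, C1, C2, C3, C4, hmuC, E2r, E4r]
        all_goals try rw [hsub]
        all_goals push_cast
        all_goals try field_simp
        all_goals ring
    · -- case (a'+1) (b'+1) 0
      have hsub : (s:ℝ) = (a':ℝ) + (b':ℝ) + 2 := by
        have := hs; push_cast [← this]; ring
      have hMne : (a':ℝ) + (b':ℝ) + (2:ℝ) ≠ 0 := by positivity
      obtain ⟨A0,A1,A2,A3,A4⟩ := ih (a' + (b'+1) + 0) (by omega) a' (b'+1) 0 rfl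
      have hmuA : mu a' (b'+1) 0 = mu (a'+1) (b'+1) 0 * ((a':ℝ)+1) / (s:ℝ) :=
        mu_pred₁' _ _ _ _ (by push_cast [hsub]; ring)
      obtain ⟨B0,B1,B2,B3,B4⟩ := ih ((a'+1) + b' + 0) (by omega) (a'+1) b' 0 rfl
      have hmuB : mu (a'+1) b' 0 = mu (a'+1) (b'+1) 0 * ((b':ℝ)+1) / (s:ℝ) :=
        mu_pred₂' _ _ _ _ (by push_cast [hsub]; ring)
      refine ⟨?_, ?_, ?_, ?_, ?_⟩
      · rw [S_rec 0 (a'+1) (b'+1) 0 hn]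
        norm_num [Finset.sum_range_succ, chv40, chv41, chv42, chv43, chv44,
          chv30, chv31, chv32, chv33, chv20, chv21, chv22, chv10, chv11, chv00]
        all_goals try simp only [chv40, chv41, chv42, chv43, chv44,
          chv30, chv31, chv32, chv33, chv20, chv21, chv22, chv10, chv11, chv00,
          Nat.cast_ofNat, Nat.cast_one]
        all_goals simp only [A0, A1, A2, A3, A4, hmuA, B0, B1, B2, B3, B4, hmuB, E2r, E4r]
        all_goals try rw [hsub]
        all_goals push_cast
        all_goals try field_simp
        all_goals ring
      · rw [S_rec 1 (a'+1) (b'+1) 0 hn]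
        norm_num [Finset.sum_range_succ, chv40, chv41, chv42, chv43, chv44,
          chv30, chv31, chv32, chv33, chv20, chv21, chv22, chv10, chv11, chv00]
        all_goals try simp only [chv40, chv41, chv42, chv43, chv44,
          chv30, chv31, chv32, chv33, chv20, chv21, chv22, chv10, chv11, chv00,
          Nat.cast_ofNat, Nat.cast_one]
        all_goals simp only [A0, A1, A2, A3, A4, hmuA, B0, B1, B2, B3, B4, hmuB, E2r, E4r]
        all_goals try rw [hsub]
        all_goals push_cast
        all_goals try field_simp
        all_goals ring
      · rw [S_rec 2 (a'+1) (b'+1) 0 hn]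
        norm_num [Finset.sum_range_succ, chv40, chv41, chv42, chv43, chv44,
          chv30, chv31, chv32, chv33, chv20, chv21, chv22, chv10, chv11, chv00]
        all_goals try simp only [chv40, chv41, chv42, chv43, chv44,
          chv30, chv31, chv32, chv33, chv20, chv21, chv22, chv10, chv11, chv00,
          Nat.cast_ofNat, Nat.cast_one]
        all_goals simp only [A0, A1, A2, A3, A4, hmuA, B0, B1, B2, B3, B4, hmuB, E2r, E4r]
        all_goals try rw [hsub]
        all_goals push_cast
        all_goals try field_simp
        all_goals ring
      · rw [S_rec 3 (a'+1) (b'+1) 0 hn]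
        norm_num [Finset.sum_range_succ, chv40, chv41, chv42, chv43, chv44,
          chv30, chv31, chv32, chv33, chv20, chv21, chv22, chv10, chv11, chv00]
        all_goals try simp only [chv40, chv41, chv42, chv43, chv44,
          chv30, chv31, chv32, chv33, chv20, chv21, chv22, chv10, chv11, chv00,
          Nat.cast_ofNat, Nat.cast_one]
        all_goals simp only [A0, A1, A2, A3, A4, hmuA, B0, B1, B2, B3, B4, hmuB, E2r, E4r]
        all_goals try rw [hsub]
        all_goals push_cast
        all_goals try field_simp
        all_goals ring
      · rw [S_rec 4 (a'+1) (b'+1) 0 hn]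
        norm_num [Finset.sum_range_succ, chv40, chv41, chv42, chv43, chv44,
          chv30, chv31, chv32, chv33, chv20, chv21, chv22, chv10, chv11, chv00]
        all_goals try simp only [chv40, chv41, chv42, chv43, chv44,
          chv30, chv31, chv32, chv33, chv20, chv21, chv22, chv10, chv11, chv00,
          Nat.cast_ofNat, Nat.cast_one]
        all_goals simp only [A0, A1, A2, A3, A4, hmuA, B0, B1, B2, B3, B4, hmuB, E2r, E4r]
        all_goals try rw [hsub]
        all_goals push_cast
        all_goals try field_simp
        all_goals ring
    · -- case (a'+1) (b'+1) (c'+1)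
      have hsub : (s:ℝ) = (a':ℝ) + (b':ℝ) + (c':ℝ) + 3 := by
        have := hs; push_cast [← this]; ring
      have hMne : (a':ℝ) + (b':ℝ) + (c':ℝ) + (3:ℝ) ≠ 0 := by positivity
      obtain ⟨A0,A1,A2,A3,A4⟩ := ih (a' + (b'+1) + (c'+1)) (by omega) a' (b'+1) (c'+1) rfl
      have hmuA : mu a' (b'+1) (c'+1) = mu (a'+1) (b'+1) (c'+1) * ((a':ℝ)+1) / (s:ℝ) :=
        mu_pred₁' _ _ _ _ (by push_cast [hsub]; ring)
      obtain ⟨B0,B1,B2,B3,B4⟩ := ih ((a'+1) + b' + (c'+1)) (by omega) (a'+1) b' (c'+1) rfl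
      have hmuB : mu (a'+1) b' (c'+1) = mu (a'+1) (b'+1) (c'+1) * ((b':ℝ)+1) / (s:ℝ) :=
        mu_pred₂' _ _ _ _ (by push_cast [hsub]; ring)
      obtain ⟨C0,C1,C2,C3,C4⟩ := ih ((a'+1) + (b'+1) + c') (by omega) (a'+1) (b'+1) c' rfl
      have hmuC : mu (a'+1) (b'+1) c' = mu (a'+1) (b'+1) (c'+1) * ((c':ℝ)+1) / (s:ℝ) :=
        mu_pred₃' _ _ _ _ (by push_cast [hsub]; ring)
      refine ⟨?_, ?_, ?_, ?_, ?_⟩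
      · rw [S_rec 0 (a'+1) (b'+1) (c'+1) hn]
        norm_num [Finset.sum_range_succ, chv40, chv41, chv42, chv43, chv44,
          chv30, chv31, chv32, chv33, chv20, chv21, chv22, chv10, chv11, chv00]
        all_goals try simp only [chv40, chv41, chv42, chv43, chv44,
          chv30, chv31, chv32, chv33, chv20, chv21, chv22, chv10, chv11, chv00,
          Nat.cast_ofNat, Nat.cast_one]
        all_goals simp only [A0, A1, A2, A3, A4, hmuA, B0, B1, B2, B3, B4, hmuB, C0, C1, C2, C3, C4, hmuC, E2r, E4r]
        all_goals try rw [hsub]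
        all_goals push_cast
        all_goals try field_simp
        all_goals ring
      · rw [S_rec 1 (a'+1) (b'+1) (c'+1) hn]
        norm_num [Finset.sum_range_succ, chv40, chv41, chv42, chv43, chv44,
          chv30, chv31, chv32, chv33, chv20, chv21, chv22, chv10, chv11, chv00]
        all_goals try simp only [chv40, chv41, chv42, chv43, chv44,
          chv30, chv31, chv32, chv33, chv20, chv21, chv22, chv10, chv11, chv00,
          Nat.cast_ofNat, Nat.cast_one]
        all_goals simp only [A0, A1, A2, A3, A4, hmuA, B0, B1, B2, B3, B4, hmuB, C0, C1, C2, C3, C4, hmuC, E2r, E4r]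
        all_goals try rw [hsub]
        all_goals push_cast
        all_goals try field_simp
        all_goals ring
      · rw [S_rec 2 (a'+1) (b'+1) (c'+1) hn]
        norm_num [Finset.sum_range_succ, chv40, chv41, chv42, chv43, chv44,
          chv30, chv31, chv32, chv33, chv20, chv21, chv22, chv10, chv11, chv00]
        all_goals try simp only [chv40, chv41, chv42, chv43, chv44,
          chv30, chv31, chv32, chv33, chv20, chv21, chv22, chv10, chv11, chv00,
          Nat.cast_ofNat, Nat.cast_one]
        all_goals simp only [A0, A1, A2, A3, A4, hmuA, B0, B1, B2, B3, B4, hmuB, C0, C1, C2, C3, C4, hmuC, E2r, E4r]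
        all_goals try rw [hsub]
        all_goals push_cast
        all_goals try field_simp
        all_goals ring
      · rw [S_rec 3 (a'+1) (b'+1) (c'+1) hn]
        norm_num [Finset.sum_range_succ, chv40, chv41, chv42, chv43, chv44,
          chv30, chv31, chv32, chv33, chv20, chv21, chv22, chv10, chv11, chv00]
        all_goals try simp only [chv40, chv41, chv42, chv43, chv44,
          chv30, chv31, chv32, chv33, chv20, chv21, chv22, chv10, chv11, chv00,
          Nat.cast_ofNat, Nat.cast_one]
        all_goals simp only [A0, A1, A2, A3, A4, hmuA, B0, B1, B2, B3, B4, hmuB, C0, C1, C2, C3, C4, hmuC, E2r, E4r]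
        all_goals try rw [hsub]
        all_goals push_cast
        all_goals try field_simp
        all_goals ring
      · rw [S_rec 4 (a'+1) (b'+1) (c'+1) hn]
        norm_num [Finset.sum_range_succ, chv40, chv41, chv42, chv43, chv44,
          chv30, chv31, chv32, chv33, chv20, chv21, chv22, chv10, chv11, chv00]
        all_goals try simp only [chv40, chv41, chv42, chv43, chv44,
          chv30, chv31, chv32, chv33, chv20, chv21, chv22, chv10, chv11, chv00,
          Nat.cast_ofNat, Nat.cast_one]
        all_goals simp only [A0, A1, A2, A3, A4, hmuA, B0, B1, B2, B3, B4, hmuB, C0, C1, C2, C3, C4, hmuC, E2r, E4r]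
        all_goals try rw [hsub]
        all_goals push_cast
        all_goals try field_simp
        all_goals ring

lemma S0_card (a b c : ℕ) : S 0 a b c = ((W a b c).card : ℝ) := by
  simp [S]

lemma bridge {n : ℕ} {w : List ℕ} (hw : w ∈ W n n n) :
    (gep w : ℝ) - (n:ℝ)^3/2 = -((n:ℝ)/2) * (DD w : ℝ) := by
  have hk := key_identity w (letters_of_mem_W hw)
  have hc := count_of_mem_W hw
  rw [hc.1, hc.2.1, hc.2.2] at hk
  have hz : 2 * (gep w : ℤ) = (n:ℤ)^3 - n * DD w := by
    rw [hk, DD]; push_cast; ring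
  have hr : 2 * (gep w : ℝ) = (n:ℝ)^3 - (n:ℝ) * (DD w : ℝ) := by exact_mod_cast hz
  linarith



lemma m2_eq (n : ℕ) : m 2 n = (n:ℝ)^4/4 := by
  obtain ⟨h0, h1, h2, h3, h4⟩ := moments (n+n+n) n n n rfl
  have hcard : ((W n n n).card : ℝ) = mu n n n := by rw [← h0, S0_card]
  have hmu := mu_pos n n n
  rw [m]
  rw [Finset.sum_congr rfl (fun w hw => by rw [bridge hw])]
  have hsum : (∑ w ∈ W n n n, (-((n:ℝ)/2) * (DD w:ℝ))^2) = ((n:ℝ)^2/4) * S 2 n n n := by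
    rw [S, Finset.mul_sum]
    exact Finset.sum_congr rfl (fun w _ => by ring)
  rw [hsum, h2, hcard]
  rw [E2r]
  field_simp
  ring

lemma m4_eq (n : ℕ) : m 4 n = (21*(n:ℝ)^8 - 16*(n:ℝ)^7)/80 := by
  obtain ⟨h0, h1, h2, h3, h4⟩ := moments (n+n+n) n n n rfl
  have hcard : ((W n n n).card : ℝ) = mu n n n := by rw [← h0, S0_card]
  have hmu := mu_pos n n n
  rw [m]
  rw [Finset.sum_congr rfl (fun w hw => by rw [bridge hw])]
  have hsum : (∑ w ∈ W n n n, (-((n:ℝ)/2) * (DD w:ℝ))^4) = ((n:ℝ)^4/16) * S 4 n n n := by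
    rw [S, Finset.mul_sum]
    exact Finset.sum_congr rfl (fun w _ => by ring)
  rw [hsum, h4, hcard]
  rw [E4r]
  field_simp
  ring

theorem gep_words_limiting_kurtosis :
    Filter.Tendsto (fun n => m 4 n / (m 2 n) ^ 2) Filter.atTop (nhds (21 / 5 : ℝ))
      ∧ (21 / 5 : ℝ) ≠ 3 := by
  constructor
  · have hg : Filter.Tendsto (fun n : ℕ => (21:ℝ)/5 - 16/5 * (1/(n:ℝ))) Filter.atTop
        (nhds (21/5 : ℝ)) := by
      have h0 : Filter.Tendsto (fun n : ℕ => 1/(n:ℝ)) Filter.atTop (nhds 0) :=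
        tendsto_one_div_atTop_nhds_zero_nat
      have := Filter.Tendsto.sub (tendsto_const_nhds (x := (21:ℝ)/5))
        (h0.const_mul (16/5 : ℝ))
      simpa using this
    refine hg.congr' ?_
    rw [Filter.eventuallyEq_iff_exists_mem]
    refine ⟨{n | 1 ≤ n}, Filter.eventually_atTop.2 ⟨1, fun n hn => hn⟩, fun n hn => ?_⟩
    have hn1 : 1 ≤ n := hn
    have hnr : (1:ℝ) ≤ (n:ℝ) := by exact_mod_cast hn1
    have hne : (n:ℝ) ≠ 0 := by linarith
    show (21:ℝ)/5 - 16/5*(1/(n:ℝ)) = m 4 n / (m 2 n)^2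
    rw [m2_eq, m4_eq]
    field_simp
    ring
  · norm_num
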